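/- Let μ be a probability measure on (0,∞) that is not a Dirac mass, let Y ∼ μ, let ρ ∈ (-1,1), ρ̄ = √(1-ρ²), and let φ' and g be measurable functions on (0,∞) with the relevant integrability. Define the 3×2-like covariance-structure matrix Q = E_μ[α α^T] where α(y) is the 3×2 matrix with rows (ρ√y + φ'(y)g(y), ρ̄√y), (1, 0), (0, 1). Then det(Q) = Var_μ(ρ√Y + φ'(Y)g(Y)) + ρ̄² (E_μ[Y] - E_μ[√Y]²) ≥ 0, with equality impossible when Y is non-degenerate under μ; hence Q is invertible. -/

import Mathlib

open MeasureTheory Matrix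

/-- The `3×2` matrix `α(y)` appearing in the large-time moderate deviations covariance
structure, with first row `(ρ√y + φ'(y)g(y), ρ̄√y)` and the identity below. -/
noncomputable def alphaMat (ρ ρb : ℝ) (φ' g : ℝ → ℝ) (y : ℝ) : Matrix (Fin 3) (Fin 2) ℝ :=
  !![ρ * Real.sqrt y + φ' y * g y, ρb * Real.sqrt y;
     1, 0;
     0, 1]

lemma var_eq_aux (μ : Measure ℝ) [IsProbabilityMeasure μ] (f : ℝ → ℝ)
    (h1 : Integrable f μ) (h2 : Integrable (fun y => f y ^ 2) μ) :
    (∫ y, f y ^ 2 ∂μ) - (∫ y, f y ∂μ) ^ 2 = ∫ y, (f y - ∫ z, f z ∂μ) ^ 2 ∂μ := by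
  set m := ∫ z, f z ∂μ with hm
  have h3 : Integrable (fun y => f y ^ 2 - 2 * m * f y) μ := h2.sub (h1.const_mul _)
  have : (fun y => (f y - m) ^ 2) = (fun y => (f y ^ 2 - 2 * m * f y) + m ^ 2) := by
    funext y; ring
  rw [this, integral_add h3 (integrable_const _),
    integral_sub h2 (h1.const_mul _), integral_const_mul, integral_const]
  simp [← hm]
  ring

/-- For a non-degenerate probability measure `μ` on `(0,∞)`, the matrix
`Q = E_μ[α αᵀ]` has determinant `Var_μ(ρ√Y + φ'(Y)g(Y)) + ρ̄²(E_μ[Y] - E_μ[√Y]²) > 0`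
(by Cauchy–Schwarz, with equality impossible for non-degenerate `Y`), hence `Q` is
invertible. -/
theorem stmt8 (μ : Measure ℝ) [IsProbabilityMeasure μ] (hsupp : μ (Set.Iic 0) = 0)
    (hnondeg : ∀ c : ℝ, ¬ (∀ᵐ y ∂μ, y = c))
    (ρ : ℝ) (hρ : ρ ∈ Set.Ioo (-1 : ℝ) 1) (ρb : ℝ) (hρb : ρb = Real.sqrt (1 - ρ ^ 2))
    (φ' g : ℝ → ℝ)
    (hint1 : Integrable (fun y => y) μ)
    (hint2 : Integrable (fun y => Real.sqrt y) μ)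
    (hint3 : Integrable (fun y => ρ * Real.sqrt y + φ' y * g y) μ)
    (hint4 : Integrable (fun y => (ρ * Real.sqrt y + φ' y * g y) ^ 2) μ)
    (Q : Matrix (Fin 3) (Fin 3) ℝ)
    (hQ : ∀ i j, Q i j = ∫ y, (alphaMat ρ ρb φ' g y * (alphaMat ρ ρb φ' g y)ᵀ) i j ∂μ) :
    Q.det = ((∫ y, (ρ * Real.sqrt y + φ' y * g y) ^ 2 ∂μ)
              - (∫ y, (ρ * Real.sqrt y + φ' y * g y) ∂μ) ^ 2)
            + (1 - ρ ^ 2) * ((∫ y, y ∂μ) - (∫ y, Real.sqrt y ∂μ) ^ 2)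
      ∧ 0 < Q.det ∧ IsUnit Q := by
  have hρ2 : (0:ℝ) < 1 - ρ ^ 2 := by
    nlinarith [hρ.1, hρ.2]
  have hρb2 : ρb ^ 2 = 1 - ρ ^ 2 := by
    rw [hρb, Real.sq_sqrt hρ2.le]
  -- a.e. positivity
  have hpos : ∀ᵐ y ∂μ, 0 < y := by
    rw [ae_iff]
    convert hsupp using 2
    ext y
    simp [not_lt]
  have hsq : ∀ᵐ y ∂μ, Real.sqrt y ^ 2 = y := by
    filter_upwards [hpos] with y hy
    exact Real.sq_sqrt hy.le
  -- compute the entries of Q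
  have h00 : Q 0 0 = (∫ y, (ρ * Real.sqrt y + φ' y * g y) ^ 2 ∂μ) + ρb ^ 2 * ∫ y, y ∂μ := by
    rw [hQ]
    have : ∀ y, (alphaMat ρ ρb φ' g y * (alphaMat ρ ρb φ' g y)ᵀ) 0 0
        = (ρ * Real.sqrt y + φ' y * g y) ^ 2 + ρb ^ 2 * Real.sqrt y ^ 2 := by
      intro y
      simp [alphaMat, Matrix.mul_apply, Fin.sum_univ_two, Matrix.transpose_apply,
        Matrix.vecHead, Matrix.vecTail]
      ring
    simp only [this]
    rw [integral_congr_ae (g := fun y => (ρ * Real.sqrt y + φ' y * g y) ^ 2 + ρb ^ 2 * y)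
      (by filter_upwards [hsq] with y hy; rw [hy]),
      integral_add hint4 (hint1.const_mul _), integral_const_mul]
  have h01 : Q 0 1 = ∫ y, (ρ * Real.sqrt y + φ' y * g y) ∂μ := by
    rw [hQ]
    congr 1; funext y
    simp [alphaMat, Matrix.mul_apply, Fin.sum_univ_two, Matrix.transpose_apply,
      Matrix.vecHead, Matrix.vecTail]
  have h02 : Q 0 2 = ρb * ∫ y, Real.sqrt y ∂μ := by
    rw [hQ, ← integral_const_mul]
    congr 1; funext y
    simp [alphaMat, Matrix.mul_apply, Fin.sum_univ_two, Matrix.transpose_apply,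
      Matrix.vecHead, Matrix.vecTail]
  have h10 : Q 1 0 = ∫ y, (ρ * Real.sqrt y + φ' y * g y) ∂μ := by
    rw [hQ]
    congr 1; funext y
    simp [alphaMat, Matrix.mul_apply, Fin.sum_univ_two, Matrix.transpose_apply,
      Matrix.vecHead, Matrix.vecTail]
  have h11 : Q 1 1 = 1 := by
    rw [hQ]
    have : ∀ y, (alphaMat ρ ρb φ' g y * (alphaMat ρ ρb φ' g y)ᵀ) 1 1 = 1 := by
      intro y
      simp [alphaMat, Matrix.mul_apply, Fin.sum_univ_two, Matrix.transpose_apply,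
        Matrix.vecHead, Matrix.vecTail]
    simp only [this]
    simp
  have h12 : Q 1 2 = 0 := by
    rw [hQ]
    have : ∀ y, (alphaMat ρ ρb φ' g y * (alphaMat ρ ρb φ' g y)ᵀ) 1 2 = 0 := by
      intro y
      simp [alphaMat, Matrix.mul_apply, Fin.sum_univ_two, Matrix.transpose_apply,
        Matrix.vecHead, Matrix.vecTail]
    simp only [this]
    simp
  have h20 : Q 2 0 = ρb * ∫ y, Real.sqrt y ∂μ := by
    rw [hQ, ← integral_const_mul]
    congr 1; funext y
    simp [alphaMat, Matrix.mul_apply, Fin.sum_univ_two, Matrix.transpose_apply,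
      Matrix.vecHead, Matrix.vecTail]
  have h21 : Q 2 1 = 0 := by
    rw [hQ]
    have : ∀ y, (alphaMat ρ ρb φ' g y * (alphaMat ρ ρb φ' g y)ᵀ) 2 1 = 0 := by
      intro y
      simp [alphaMat, Matrix.mul_apply, Fin.sum_univ_two, Matrix.transpose_apply,
        Matrix.vecHead, Matrix.vecTail]
    simp only [this]
    simp
  have h22 : Q 2 2 = 1 := by
    rw [hQ]
    have : ∀ y, (alphaMat ρ ρb φ' g y * (alphaMat ρ ρb φ' g y)ᵀ) 2 2 = 1 := by
      intro y
      simp [alphaMat, Matrix.mul_apply, Fin.sum_univ_two, Matrix.transpose_apply,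
        Matrix.vecHead, Matrix.vecTail]
    simp only [this]
    simp
  -- the determinant
  have hdet : Q.det = ((∫ y, (ρ * Real.sqrt y + φ' y * g y) ^ 2 ∂μ)
              - (∫ y, (ρ * Real.sqrt y + φ' y * g y) ∂μ) ^ 2)
            + (1 - ρ ^ 2) * ((∫ y, y ∂μ) - (∫ y, Real.sqrt y ∂μ) ^ 2) := by
    rw [Matrix.det_fin_three, h00, h01, h02, h10, h11, h12, h20, h21, h22, ← hρb2]
    ring
  have hposdet : 0 < Q.det := by
    have hvar1 : 0 ≤ (∫ y, (ρ * Real.sqrt y + φ' y * g y) ^ 2 ∂μ)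
        - (∫ y, (ρ * Real.sqrt y + φ' y * g y) ∂μ) ^ 2 := by
      rw [var_eq_aux μ _ hint3 hint4]
      exact integral_nonneg fun y => sq_nonneg _
    have hsqt2int : Integrable (fun y => Real.sqrt y ^ 2) μ :=
      hint1.congr (Filter.EventuallyEq.symm
        (hsq : (fun y => Real.sqrt y ^ 2) =ᶠ[ae μ] fun y => y))
    have hvar2 : 0 < (∫ y, y ∂μ) - (∫ y, Real.sqrt y ∂μ) ^ 2 := by
      have heq : (∫ y, y ∂μ) = ∫ y, Real.sqrt y ^ 2 ∂μ := (integral_congr_ae hsq).symm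
      rw [heq, var_eq_aux μ _ hint2 hsqt2int]
      rcases lt_or_eq_of_le (integral_nonneg (μ := μ)
        (f := fun y => (Real.sqrt y - ∫ z, Real.sqrt z ∂μ) ^ 2)
        (fun y => sq_nonneg (Real.sqrt y - ∫ z, Real.sqrt z ∂μ))) with h | h
      · exact h
      · exfalso
        set m := ∫ z, Real.sqrt z ∂μ
        have hintsq : Integrable (fun y => (Real.sqrt y - m) ^ 2) μ := by
          have : (fun y => (Real.sqrt y - m) ^ 2)
              = fun y => (Real.sqrt y ^ 2 - 2 * m * Real.sqrt y) + m ^ 2 := by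
            funext y; ring
          rw [this]
          exact (hsqt2int.sub (hint2.const_mul _)).add (integrable_const _)
        have h0 : ∀ᵐ y ∂μ, (Real.sqrt y - m) ^ 2 = 0 := by
          have := (integral_eq_zero_iff_of_nonneg (fun y => sq_nonneg _) hintsq).mp h.symm
          filter_upwards [this] with y hy
          simpa using hy
        apply hnondeg (m ^ 2)
        filter_upwards [h0, hpos] with y hy hyp
        have : Real.sqrt y = m := by nlinarith [sq_nonneg (Real.sqrt y - m)]
        rw [← Real.sq_sqrt hyp.le, this]
    rw [hdet]
    nlinarith
  exact ⟨hdet, hposdet, by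
    rw [Matrix.isUnit_iff_isUnit_det, isUnit_iff_ne_zero]
    exact ne_of_gt hposdet⟩
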